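/- The function p ↦ D(p) = 2^{p/2} Γ(1-p) / Γ(1-p/2)³ is strictly increasing on (0,1), and D(p) > 1 for all p ∈ (0,1). -/

import Mathlib

open Real

noncomputable def D (p : ℝ) : ℝ :=
  2 ^ (p / 2) * Real.Gamma (1 - p) / Real.Gamma (1 - p / 2) ^ 3

namespace StmtAux

open Filter Topology Finset

/-- log of the Gamma-sequence approximation to `D`. -/
noncomputable def En (n : ℕ) (p : ℝ) : ℝ :=
  p / 2 * Real.log 2 + (p / 2 - 2) * Real.log n - 2 * Real.log (n.factorial : ℝ) +
    ∑ j ∈ Finset.range (n + 1), (3 * Real.log ((j : ℝ) + 1 - p / 2) - Real.log ((j : ℝ) + 1 - p))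

/-- derivative of `En n`. -/
noncomputable def en (n : ℕ) (p : ℝ) : ℝ :=
  Real.log 2 / 2 + Real.log n / 2 +
    ∑ j ∈ Finset.range (n + 1), (1 / ((j : ℝ) + 1 - p) - (3 / 2) / ((j : ℝ) + 1 - p / 2))

lemma hasDerivAt_En (n : ℕ) {p : ℝ} (hp : p < 1) : HasDerivAt (En n) (en n p) p := by
  have hsum : HasDerivAt (fun p : ℝ => ∑ j ∈ Finset.range (n + 1),
      (3 * Real.log ((j : ℝ) + 1 - p / 2) - Real.log ((j : ℝ) + 1 - p)))
      (∑ j ∈ Finset.range (n + 1), (1 / ((j : ℝ) + 1 - p) - (3 / 2) / ((j : ℝ) + 1 - p / 2))) p := by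
    have h : ∀ j ∈ Finset.range (n + 1), HasDerivAt
        (fun p : ℝ => 3 * Real.log ((j : ℝ) + 1 - p / 2) - Real.log ((j : ℝ) + 1 - p))
        (1 / ((j : ℝ) + 1 - p) - (3 / 2) / ((j : ℝ) + 1 - p / 2)) p := by
      intro j _
      have hj : (0:ℝ) ≤ (j : ℝ) := j.cast_nonneg
      have h1 : ((j : ℝ) + 1 - p) ≠ 0 := by linarith
      have h2 : ((j : ℝ) + 1 - p / 2) ≠ 0 := by linarith
      have d1 : HasDerivAt (fun p : ℝ => (j : ℝ) + 1 - p / 2) (-(1/2)) p := by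
        simpa using ((hasDerivAt_id p).div_const 2).const_sub ((j : ℝ) + 1)
      have d2 : HasDerivAt (fun p : ℝ => (j : ℝ) + 1 - p) (-1) p := by
        simpa using (hasDerivAt_id p).const_sub ((j : ℝ) + 1)
      have l1 := (d1.log h2).const_mul 3
      have l2 := d2.log h1
      exact (l1.fun_sub l2).congr_deriv (by ring)
    exact HasDerivAt.fun_sum h
  have h1 : HasDerivAt (fun p : ℝ => p / 2 * Real.log 2) (Real.log 2 / 2) p := by
    simpa [div_eq_mul_inv, mul_comm] using ((hasDerivAt_id p).div_const 2).mul_const (Real.log 2)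
  have h2 : HasDerivAt (fun p : ℝ => (p / 2 - 2) * Real.log n) (Real.log n / 2) p := by
    simpa [div_eq_mul_inv, mul_comm] using
      (((hasDerivAt_id p).div_const 2).sub_const 2).mul_const (Real.log n)
  have h3 : HasDerivAt (fun _ : ℝ => 2 * Real.log (n.factorial : ℝ)) 0 p := hasDerivAt_const _ _
  have := ((h1.fun_add h2).fun_sub h3).fun_add hsum
  refine this.congr_deriv ?_
  simp [en]

lemma term_mono {p : ℝ} (hp0 : 0 ≤ p) (hp1 : p < 1) (j : ℕ) :
    1 / ((j : ℝ) + 1) - (3 / 2) / ((j : ℝ) + 1) ≤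
      1 / ((j : ℝ) + 1 - p) - (3 / 2) / ((j : ℝ) + 1 - p / 2) := by
  set a : ℝ := (j : ℝ) + 1 with ha
  have hj : (0:ℝ) ≤ (j : ℝ) := j.cast_nonneg
  have ha1 : 1 ≤ a := by rw [ha]; linarith
  have h1 : 0 < a - p := by linarith
  have h2 : 0 < a - p / 2 := by linarith
  have h3 : 0 < a := by linarith
  have e1 : 1 / (a - p) - 1 / a = p / (a * (a - p)) := by
    rw [div_sub_div _ _ h1.ne' h3.ne', div_eq_div_iff (by positivity) (by positivity)]
    ring
  have e2 : (3 / 2) / (a - p / 2) - (3 / 2) / a = (3 / 4 * p) / (a * (a - p / 2)) := by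
    rw [div_sub_div _ _ h2.ne' h3.ne', div_eq_div_iff (by positivity) (by positivity)]
    ring
  have e3 : (3 / 4 * p) / (a * (a - p / 2)) ≤ p / (a * (a - p)) := by
    gcongr
    · linarith
    · linarith
  linarith

lemma en_zero (n : ℕ) : en n 0 = Real.log 2 / 2 + Real.log n / 2 - (harmonic (n + 1) : ℝ) / 2 := by
  have hH : ((harmonic (n + 1) : ℚ) : ℝ) = ∑ j ∈ Finset.range (n + 1), 1 / ((j : ℝ) + 1) := by
    rw [harmonic]
    push_cast
    simp [one_div]
  have hs : ∑ j ∈ Finset.range (n + 1), (1 / ((j : ℝ) + 1 - 0) - (3 / 2) / ((j : ℝ) + 1 - 0 / 2))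
      = ∑ j ∈ Finset.range (n + 1), (-(1 / 2) * (1 / ((j : ℝ) + 1))) :=
    Finset.sum_congr rfl (by intro j _; ring)
  rw [en, hs, ← Finset.mul_sum, ← hH]
  ring

lemma en_lower {n : ℕ} (hn : 100 ≤ n) {p : ℝ} (hp0 : 0 ≤ p) (hp1 : p < 1) :
    1 / 500 ≤ en n p := by
  have hmono : en n 0 ≤ en n p := by
    have h0 : en n 0 = Real.log 2 / 2 + Real.log n / 2 +
        ∑ j ∈ Finset.range (n + 1), (1 / ((j : ℝ) + 1) - (3 / 2) / ((j : ℝ) + 1)) := by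
      rw [en]
      congr 1
      exact Finset.sum_congr rfl (by intro j _; norm_num)
    rw [h0, en]
    have hs := Finset.sum_le_sum (fun j (_ : j ∈ Finset.range (n+1)) => term_mono hp0 hp1 j)
    linarith
  have hnR : (100 : ℝ) ≤ (n : ℝ) := by exact_mod_cast hn
  have hnpos : (0 : ℝ) < (n : ℝ) := by linarith
  have hlog2 : (0.6931471803 : ℝ) < Real.log 2 := Real.log_two_gt_d9
  have hH : (harmonic (n + 1) : ℝ) < Real.log ((n : ℝ) + 2) + 2 / 3 := by
    have h1 := Real.eulerMascheroniSeq_lt_eulerMascheroniSeq' (n + 1) 6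
    have h2 := Real.eulerMascheroniSeq'_six_lt_two_thirds
    rw [Real.eulerMascheroniSeq] at h1
    push_cast at h1
    have : ((n : ℝ) + 1 + 1) = (n : ℝ) + 2 := by ring
    rw [this] at h1
    linarith
  have hln : Real.log ((n : ℝ) + 2) ≤ Real.log n + 2 / n := by
    have h1 : Real.log (((n : ℝ) + 2) / n) ≤ ((n : ℝ) + 2) / n - 1 :=
      Real.log_le_sub_one_of_pos (by positivity)
    rw [Real.log_div (by positivity) (by positivity)] at h1
    have h2 : ((n : ℝ) + 2) / n - 1 = 2 / n := by field_simp; ring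
    linarith
  have h2n : (2 : ℝ) / n ≤ 1 / 50 := by
    rw [div_le_div_iff₀ hnpos (by norm_num)]
    linarith
  have := en_zero n
  linarith

lemma En_gap {n : ℕ} (hn : 100 ≤ n) {p q : ℝ} (hp0 : 0 ≤ p) (hpq : p ≤ q) (hq1 : q < 1) :
    En n p + 1 / 500 * (q - p) ≤ En n q := by
  set F : ℝ → ℝ := fun x => En n x - 1 / 500 * x with hF
  have hderiv : ∀ x ∈ Set.Icc (0:ℝ) q, HasDerivAt F (en n x - 1 / 500) x := by
    intro x hx
    have h := (hasDerivAt_En n (lt_of_le_of_lt hx.2 hq1)).fun_sub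
      ((hasDerivAt_id x).const_mul ((1:ℝ)/500))
    rw [hF]
    simpa using h
  have hmono : MonotoneOn F (Set.Icc (0:ℝ) q) := by
    apply monotoneOn_of_deriv_nonneg (convex_Icc 0 q)
    · intro x hx
      exact (hderiv x hx).continuousAt.continuousWithinAt
    · intro x hx
      rw [interior_Icc] at hx
      exact (hderiv x ⟨hx.1.le, hx.2.le⟩).differentiableAt.differentiableWithinAt
    · intro x hx
      rw [interior_Icc] at hx
      rw [(hderiv x ⟨hx.1.le, hx.2.le⟩).deriv]
      have := en_lower hn hx.1.le (hx.2.trans hq1)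
      linarith
  have := hmono (Set.mem_Icc.2 ⟨hp0, hpq⟩) (Set.mem_Icc.2 ⟨hp0.trans hpq, le_rfl⟩) hpq
  rw [hF] at this
  simp only at this
  linarith

lemma GammaSeq_pos {s : ℝ} (hs : 0 < s) (n : ℕ) (hn : 1 ≤ n) : 0 < Real.GammaSeq s n := by
  rw [Real.GammaSeq]
  have hnp : (0:ℝ) < (n:ℝ) := by exact_mod_cast hn
  have hprod : 0 < ∏ j ∈ Finset.range (n + 1), (s + (j:ℝ)) :=
    Finset.prod_pos (fun j _ => by positivity)
  positivity

lemma log_GammaSeq {s : ℝ} (hs : 0 < s) {n : ℕ} (hn : 1 ≤ n) :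
    Real.log (Real.GammaSeq s n) = s * Real.log n + Real.log (n.factorial : ℝ) -
      ∑ j ∈ Finset.range (n + 1), Real.log (s + (j:ℝ)) := by
  have hnp : (0:ℝ) < (n:ℝ) := by exact_mod_cast hn
  have hfac : (0:ℝ) < (n.factorial : ℝ) := by exact_mod_cast n.factorial_pos
  have hprod : 0 < ∏ j ∈ Finset.range (n + 1), (s + (j:ℝ)) :=
    Finset.prod_pos (fun j _ => by positivity)
  rw [Real.GammaSeq, Real.log_div (by positivity) hprod.ne', Real.log_mul (by positivity) hfac.ne',
    Real.log_rpow hnp, Real.log_prod (fun j _ => by positivity)]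

lemma D_pos {p : ℝ} (hp0 : 0 ≤ p) (hp1 : p < 1) : 0 < D p := by
  rw [D]
  have h1 : 0 < Real.Gamma (1 - p) := Real.Gamma_pos_of_pos (by linarith)
  have h2 : 0 < Real.Gamma (1 - p / 2) := Real.Gamma_pos_of_pos (by linarith)
  positivity

lemma En_eq_log {n : ℕ} (hn : 1 ≤ n) {p : ℝ} (hp0 : 0 ≤ p) (hp1 : p < 1) :
    En n p = Real.log (2 ^ (p / 2) * Real.GammaSeq (1 - p) n /
      (Real.GammaSeq (1 - p / 2) n) ^ 3) := by
  have hs1 : (0:ℝ) < 1 - p := by linarith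
  have hs2 : (0:ℝ) < 1 - p / 2 := by linarith
  have hg1 := GammaSeq_pos hs1 n hn
  have hg2 := GammaSeq_pos hs2 n hn
  have h2p : (0:ℝ) < (2:ℝ) ^ (p / 2) := Real.rpow_pos_of_pos two_pos _
  rw [Real.log_div (by positivity) (by positivity), Real.log_mul h2p.ne' hg1.ne',
    Real.log_rpow two_pos, Real.log_pow, log_GammaSeq hs1 hn, log_GammaSeq hs2 hn]
  have e1 : ∑ j ∈ Finset.range (n + 1), Real.log (1 - p + (j:ℝ))
      = ∑ j ∈ Finset.range (n + 1), Real.log ((j:ℝ) + 1 - p) :=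
    Finset.sum_congr rfl (fun j _ => by rw [show (1:ℝ) - p + j = (j:ℝ) + 1 - p by ring])
  have e2 : ∑ j ∈ Finset.range (n + 1), Real.log (1 - p / 2 + (j:ℝ))
      = ∑ j ∈ Finset.range (n + 1), Real.log ((j:ℝ) + 1 - p / 2) :=
    Finset.sum_congr rfl (fun j _ => by rw [show (1:ℝ) - p / 2 + j = (j:ℝ) + 1 - p / 2 by ring])
  rw [e1, e2, En]
  rw [Finset.sum_sub_distrib, ← Finset.mul_sum]
  push_cast
  ring

lemma tendsto_En {p : ℝ} (hp0 : 0 ≤ p) (hp1 : p < 1) :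
    Tendsto (fun n => En n p) atTop (𝓝 (Real.log (D p))) := by
  have hs2 : (0:ℝ) < 1 - p / 2 := by linarith
  have h2 : Real.Gamma (1 - p / 2) ^ 3 ≠ 0 := by
    have := Real.Gamma_pos_of_pos hs2
    positivity
  have hD : Tendsto (fun n => 2 ^ (p / 2) * Real.GammaSeq (1 - p) n /
      (Real.GammaSeq (1 - p / 2) n) ^ 3) atTop (𝓝 (D p)) := by
    rw [D]
    exact (((Real.GammaSeq_tendsto_Gamma (1 - p)).const_mul _).div
      ((Real.GammaSeq_tendsto_Gamma (1 - p / 2)).pow 3) h2)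
  have hlog : Tendsto (fun n => Real.log (2 ^ (p / 2) * Real.GammaSeq (1 - p) n /
      (Real.GammaSeq (1 - p / 2) n) ^ 3)) atTop (𝓝 (Real.log (D p))) :=
    ((Real.continuousAt_log (D_pos hp0 hp1).ne').tendsto.comp hD)
  apply hlog.congr'
  filter_upwards [Filter.eventually_ge_atTop 1] with n hn
  exact (En_eq_log hn hp0 hp1).symm

lemma key {p q : ℝ} (hp0 : 0 ≤ p) (hpq : p < q) (hq1 : q < 1) :
    Real.log (D p) + 1 / 500 * (q - p) ≤ Real.log (D q) := by
  refine le_of_tendsto_of_tendsto ((tendsto_En hp0 (hpq.trans hq1)).add_const _)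
    (tendsto_En (hp0.trans hpq.le) hq1) ?_
  filter_upwards [Filter.eventually_ge_atTop 100] with n hn
  exact En_gap hn hp0 hpq.le hq1

lemma D_zero : D 0 = 1 := by
  simp [D, Real.Gamma_one]

end StmtAux

theorem stmt4 :
    StrictMonoOn D (Set.Ioo (0:ℝ) 1) ∧ ∀ p ∈ Set.Ioo (0:ℝ) 1, 1 < D p := by
  have hlt : ∀ p q : ℝ, 0 ≤ p → p < q → q < 1 → D p < D q := by
    intro p q hp0 hpq hq1
    have h := @StmtAux.key p q hp0 hpq hq1
    have hDp := StmtAux.D_pos hp0 (hpq.trans hq1)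
    have hDq := StmtAux.D_pos (hp0.trans hpq.le) hq1
    have : Real.log (D p) < Real.log (D q) := by nlinarith
    calc D p = Real.exp (Real.log (D p)) := (Real.exp_log hDp).symm
      _ < Real.exp (Real.log (D q)) := Real.exp_lt_exp.2 this
      _ = D q := Real.exp_log hDq
  constructor
  · intro p hp q hq hpq
    exact hlt p q hp.1.le hpq hq.2
  · intro p hp
    have := hlt 0 p le_rfl hp.1 hp.2
    rwa [StmtAux.D_zero] at this
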